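/- Let R → S be a ring morphism such that S is a free R-module of finite rank with an R-linear map λ: S → R generating Hom_R(S,R) as an S-module, and let (e_i), (f_j) be dual R-bases satisfying λ(e_i f_j) = δ_ij. Then the element Σ_i e_i ⊗ f_i is central in the S-bimodule S ⊗_R S, i.e. for all a ∈ S, Σ_i (a·e_i) ⊗ f_i = Σ_i e_i ⊗ (f_i·a). -/

import Mathlib

open scoped TensorProduct

/-- **Centrality of the Casimir element.**
Let `R → S` be a ring morphism such that `S` is a free `R`-module of finite rank, with an
`R`-linear map `λ : S → R` generating `Hom_R(S, R)` as an `S`-module, and let `(e_i)`, `(f_j)`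
be dual `R`-bases satisfying `λ (e_i * f_j) = δ_{ij}`.  Then `Σ_i e_i ⊗ f_i` is central in the
`S`-bimodule `S ⊗_R S`: for every `a ∈ S`, `Σ_i (a * e_i) ⊗ f_i = Σ_i e_i ⊗ (f_i * a)`. -/
theorem stmt0 {R S : Type*} [CommRing R] [CommRing S] [Algebra R S]
    {n : ℕ} (b : Module.Basis (Fin n) R S)
    (lam : S →ₗ[R] R)
    (hgen : ∀ φ : S →ₗ[R] R, ∃ s : S, ∀ x : S, φ x = lam (s * x))
    (e f : Fin n → S)
    (he : ∃ be : Module.Basis (Fin n) R S, ∀ i, be i = e i)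
    (hf : ∃ bf : Module.Basis (Fin n) R S, ∀ i, bf i = f i)
    (hdual : ∀ i j, lam (e i * f j) = if i = j then (1 : R) else 0)
    (a : S) :
    ∑ i, (a * e i) ⊗ₜ[R] f i = ∑ i, e i ⊗ₜ[R] (f i * a) := by
  have hx : ∀ x : S, x = ∑ j, lam (x * f j) • e j := by
    obtain ⟨be, hbe⟩ := he
    let g : S →ₗ[R] S :=
      { toFun := fun x => ∑ j, lam (x * f j) • e j
        map_add' := by
          intro x y
          simp [add_mul, add_smul, Finset.sum_add_distrib]
        map_smul' := by
          intro c x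
          simp [smul_mul_assoc, smul_smul, Finset.smul_sum] }
    have hg : g = LinearMap.id := by
      apply be.ext
      intro i
      simp [g, hbe, hdual, ite_smul]
    intro x
    have := congrFun (congrArg (fun h => h.toFun) hg) x
    simpa [g] using this.symm
  have hy : ∀ y : S, y = ∑ j, lam (e j * y) • f j := by
    obtain ⟨bf, hbf⟩ := hf
    let g : S →ₗ[R] S :=
      { toFun := fun y => ∑ j, lam (e j * y) • f j
        map_add' := by
          intro x y
          simp [mul_add, add_smul, Finset.sum_add_distrib]
        map_smul' := by
          intro c x
          simp [mul_smul_comm, smul_smul, Finset.smul_sum] }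
    have hg : g = LinearMap.id := by
      apply bf.ext
      intro i
      simp [g, hbf, hdual, ite_smul, eq_comm]
    intro y
    have := congrFun (congrArg (fun h => h.toFun) hg) y
    simpa [g] using this.symm
  calc ∑ i, (a * e i) ⊗ₜ[R] f i
      = ∑ i, (∑ j, lam (a * e i * f j) • e j) ⊗ₜ[R] f i := by
        refine Finset.sum_congr rfl fun i _ => ?_
        rw [← hx (a * e i)]
    _ = ∑ i, ∑ j, lam (a * e i * f j) • (e j ⊗ₜ[R] f i) := by
        simp [TensorProduct.sum_tmul, TensorProduct.smul_tmul']
    _ = ∑ j, ∑ i, lam (a * e i * f j) • (e j ⊗ₜ[R] f i) := by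
        rw [Finset.sum_comm]
    _ = ∑ j, e j ⊗ₜ[R] (f j * a) := by
        refine Finset.sum_congr rfl fun j _ => ?_
        rw [hy (f j * a)]
        simp only [TensorProduct.tmul_sum, TensorProduct.tmul_smul]
        refine Finset.sum_congr rfl fun i _ => ?_
        ring_nf
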